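/- Let (H,E) be a simplicial semigroup with H ⊆ ℕ^N, k a field, R = k[H] the semigroup ring, and S = k[ℕE] the subalgebra of R spanned by the monomials t^z with z ∈ ℕb_1+⋯+ℕb_d. Then R is free as an S-module if and only if the monomials {t^h : h ∈ Ap(H,E)} form an S-basis of R; in that case R = ⊕_{h ∈ Ap(H,E)} S·t^h and, equivalently, every element of H can be written uniquely as a + z with a ∈ Ap(H,E) and z ∈ ℕb_1+⋯+ℕb_d. -/

import Mathlib

open scoped Classical

set_option maxHeartbeats 1000000
set_option synthInstance.maxHeartbeats 1000000

namespace AGpaper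

/-- `(H, E)` is a simplicial semigroup of rank `d` with extreme rays `b : Fin d → ℤ^N`. -/
def IsSimplicial (N d : ℕ) (H : AddSubmonoid (Fin N → ℤ)) (b : Fin d → (Fin N → ℤ)) : Prop :=
  H.FG ∧ (∀ i, b i ∈ H) ∧
  LinearIndependent ℚ (fun i : Fin d => (fun j : Fin N => ((b i j : ℚ)))) ∧
  (∃ n : ℕ, 0 < n ∧ ∀ x ∈ H, ∃ c : Fin d → ℕ, (n : ℤ) • x = ∑ i, (c i : ℤ) • b i)

/-- The Apéry set w.r.t. a general family of extreme rays. -/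
def aperyG {N d : ℕ} (H : AddSubmonoid (Fin N → ℤ)) (b : Fin d → (Fin N → ℤ)) :
    Set (Fin N → ℤ) :=
  {x | x ∈ H ∧ ∀ i : Fin d, x - b i ∉ H}

/-- The monomial `t^x` in the group algebra `k[ℤ^N]`. -/
noncomputable def mono (k : Type*) [Field k] {N : ℕ} (x : Fin N → ℤ) :
    AddMonoidAlgebra k (Fin N → ℤ) :=
  AddMonoidAlgebra.single x 1

/-- The subalgebra `S = k[ℕE] = k[ℕb₁ + ⋯ + ℕb_d]` of the group algebra. -/
noncomputable def Ssub (k : Type*) [Field k] {N d : ℕ} (b : Fin d → (Fin N → ℤ)) :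
    Subalgebra k (AddMonoidAlgebra k (Fin N → ℤ)) :=
  Algebra.adjoin k {f | ∃ z : Fin N → ℤ, (∃ c : Fin d → ℕ, z = ∑ i, (c i : ℤ) • b i) ∧
    f = mono k z}

/-- `R = k[H]` viewed as an `S`-submodule of the group algebra: the `S`-span of the
monomials `t^h`, `h ∈ H`. -/
noncomputable def Rsmod (k : Type*) [Field k] {N d : ℕ} (H : AddSubmonoid (Fin N → ℤ))
    (b : Fin d → (Fin N → ℤ)) :
    Submodule ↥(Ssub k b) (AddMonoidAlgebra k (Fin N → ℤ)) :=
  Submodule.span ↥(Ssub k b) {f | ∃ h ∈ H, f = mono k h}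

section aux

variable {k : Type*} [Field k] {N d : ℕ} {H : AddSubmonoid (Fin N → ℤ)}
  {b : Fin d → (Fin N → ℤ)}

/-- membership in the free submonoid `ℕE = ℕb₁+⋯+ℕb_d`. -/
def MemM (b : Fin d → (Fin N → ℤ)) (z : Fin N → ℤ) : Prop :=
  ∃ c : Fin d → ℕ, z = ∑ i, (c i : ℤ) • b i

lemma memM_zero : MemM b 0 := ⟨0, by simp⟩

lemma memM_add {z z' : Fin N → ℤ} (h : MemM b z) (h' : MemM b z') : MemM b (z + z') := by
  obtain ⟨c, rfl⟩ := h; obtain ⟨c', rfl⟩ := h'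
  refine ⟨c + c', ?_⟩
  rw [← Finset.sum_add_distrib]
  refine Finset.sum_congr rfl fun i _ => ?_
  simp only [Pi.add_apply]; push_cast; rw [add_smul]

lemma memM_single (i : Fin d) : MemM b (b i) := by
  refine ⟨fun j => if j = i then 1 else 0, ?_⟩
  rw [Finset.sum_congr rfl (g := fun j => if j = i then b i else 0)]
  · simp
  · intro j _; split <;> simp_all

lemma coeff_unique (hli : LinearIndependent ℚ (fun i : Fin d => (fun j : Fin N => ((b i j : ℚ)))))
    (m : Fin d → ℤ) (h : ∑ i, m i • b i = 0) : ∀ i, m i = 0 := by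
  have key : ∀ i, (m i : ℚ) = 0 := by
    apply Fintype.linearIndependent_iff.mp hli (fun i => (m i : ℚ))
    funext j
    have hj : (∑ i, m i • b i) j = 0 := by rw [h]; rfl
    simp only [Finset.sum_apply, Pi.smul_apply, smul_eq_mul] at hj
    simp only [Finset.sum_apply, Pi.smul_apply, smul_eq_mul, Pi.zero_apply]
    exact_mod_cast congrArg (fun x : ℤ => (x : ℚ)) hj
  intro i; exact_mod_cast key i

lemma not_both_sub (hli : LinearIndependent ℚ (fun i : Fin d => (fun j : Fin N => ((b i j : ℚ)))))
    {z z' : Fin N → ℤ} (hz : MemM b (z - z')) (hz' : MemM b (z' - z)) :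
    z = z' := by
  obtain ⟨c, hc⟩ := hz; obtain ⟨c', hc'⟩ := hz'
  have hsum : ∑ i, ((c i : ℤ) + (c' i : ℤ)) • b i = 0 := by
    have h0 : (z - z') + (z' - z) = 0 := by abel
    rw [hc, hc'] at h0
    rw [← h0, ← Finset.sum_add_distrib]
    exact Finset.sum_congr rfl fun i _ => (add_smul _ _ _)
  have h := coeff_unique hli _ hsum
  have hcz : ∀ i, (c i : ℤ) = 0 := fun i => by have := h i; omega
  have : z - z' = 0 := by rw [hc]; simp [hcz]
  exact sub_eq_zero.mp this

lemma memM_nonzero {z : Fin N → ℤ} {c : Fin d → ℕ} (hc : z = ∑ i, (c i : ℤ) • b i)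
    (hz : z ≠ 0) : ∃ j, c j ≠ 0 := by
  by_contra h
  push_neg at h
  exact hz (by rw [hc]; simp [h])

lemma memM_sub_single
    {z : Fin N → ℤ} {c : Fin d → ℕ} (hc : z = ∑ i, (c i : ℤ) • b i)
    {j : Fin d} (hj : c j ≠ 0) : MemM b (z - b j) := by
  refine ⟨fun i => c i - (if i = j then 1 else 0), ?_⟩
  rw [hc]
  have : ∀ i ∈ Finset.univ, ((c i - (if i = j then 1 else 0) : ℕ) : ℤ) • b i
      = (c i : ℤ) • b i - (if i = j then (1:ℤ) else 0) • b i := by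
    intro i _
    rcases eq_or_ne i j with rfl | hne
    · simp only [if_pos rfl, if_true]
      rw [Nat.cast_sub (by omega), sub_smul, Nat.cast_one]
    · simp [hne]
  rw [Finset.sum_congr rfl this, Finset.sum_sub_distrib]
  congr 1
  rw [Finset.sum_congr rfl (g := fun i => if i = j then b j else 0)]
  · simp
  · intro i _; split <;> simp_all

lemma mono_mul_mono (x y : Fin N → ℤ) : mono k x * mono k y = mono k (x + y) := by
  simp [mono, AddMonoidAlgebra.single_mul_single]

lemma mono_mul_apply (x : Fin N → ℤ) (f : AddMonoidAlgebra k (Fin N → ℤ)) (y : Fin N → ℤ) :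
    (mono k x * f).coeff y = f.coeff (-x + y) := by
  unfold mono
  rw [AddMonoidAlgebra.coeff_single_mul_apply, one_mul]

lemma mul_mono_apply (f : AddMonoidAlgebra k (Fin N → ℤ)) (x y : Fin N → ℤ) :
    (f * mono k x).coeff y = f.coeff (y - x) := by
  unfold mono
  rw [AddMonoidAlgebra.coeff_mul_single_apply, mul_one, sub_eq_add_neg]

lemma mono_ne_zero (x : Fin N → ℤ) : mono k x ≠ 0 :=
  fun h => one_ne_zero (α := k) (AddMonoidAlgebra.single_eq_zero.mp h)

lemma mono_mem_Ssub {z : Fin N → ℤ} (hz : MemM b z) : mono k z ∈ Ssub k b :=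
  Algebra.subset_adjoin ⟨z, hz, rfl⟩

lemma memM_mem_H (hb : ∀ i, b i ∈ H) {z : Fin N → ℤ} (hz : MemM b z) : z ∈ H := by
  obtain ⟨c, rfl⟩ := hz
  refine AddSubmonoid.sum_mem _ fun i _ => ?_
  have : (c i : ℤ) • b i = c i • b i := natCast_zsmul _ _
  rw [this]
  exact AddSubmonoid.nsmul_mem _ (hb i) _

lemma Ssub_support {s : AddMonoidAlgebra k (Fin N → ℤ)} (hs : s ∈ Ssub k b) :
    ∀ u, s.coeff u ≠ 0 → MemM b u := by
  induction hs using Algebra.adjoin_induction with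
  | mem x hx =>
    obtain ⟨z, hz, rfl⟩ := hx
    intro u hu
    have : u ∈ (mono (N := N) k z).coeff.support := Finsupp.mem_support_iff.mpr hu
    have := Finsupp.support_single_subset this
    simp only [Finset.mem_singleton] at this
    subst this; exact hz
  | algebraMap r =>
    intro u hu
    have : (algebraMap k (AddMonoidAlgebra k (Fin N → ℤ)) r) = AddMonoidAlgebra.single 0 r :=
      rfl
    rw [this] at hu
    have : u ∈ (AddMonoidAlgebra.single (0 : Fin N → ℤ) r : AddMonoidAlgebra k _).coeff.support :=
      Finsupp.mem_support_iff.mpr hu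
    have := Finsupp.support_single_subset this
    simp only [Finset.mem_singleton] at this
    subst this; exact memM_zero
  | add x y hx hy ihx ihy =>
    intro u hu
    have hxy : x.coeff u ≠ 0 ∨ y.coeff u ≠ 0 := by
      by_contra hc; push_neg at hc
      exact hu (by rw [AddMonoidAlgebra.coeff_add, Finsupp.add_apply, hc.1, hc.2, add_zero])
    rcases hxy with h | h
    · exact ihx u h
    · exact ihy u h
  | mul x y hx hy ihx ihy =>
    intro u hu
    have hmem : u ∈ (x * y).coeff.support := Finsupp.mem_support_iff.mpr hu
    have := AddMonoidAlgebra.support_coeff_mul_subset x y hmem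
    rw [Finset.mem_add] at this
    obtain ⟨p, hp, q, hq, rfl⟩ := this
    exact memM_add (ihx p (Finsupp.mem_support_iff.mp hp)) (ihy q (Finsupp.mem_support_iff.mp hq))

lemma Rsmod_support (hb : ∀ i, b i ∈ H) {f : AddMonoidAlgebra k (Fin N → ℤ)}
    (hf : f ∈ Rsmod k H b) : ∀ u, f.coeff u ≠ 0 → u ∈ H := by
  induction hf using Submodule.span_induction with
  | mem x hx =>
    obtain ⟨h, hh, rfl⟩ := hx
    intro u hu
    have : u ∈ (mono (N := N) k h).coeff.support := Finsupp.mem_support_iff.mpr hu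
    have := Finsupp.support_single_subset this
    simp only [Finset.mem_singleton] at this
    subst this; exact hh
  | zero => intro u hu; simp at hu
  | add x y hx hy ihx ihy =>
    intro u hu
    have hxy : x.coeff u ≠ 0 ∨ y.coeff u ≠ 0 := by
      by_contra hc; push_neg at hc
      exact hu (by rw [AddMonoidAlgebra.coeff_add, Finsupp.add_apply, hc.1, hc.2, add_zero])
    rcases hxy with h | h
    · exact ihx u h
    · exact ihy u h
  | smul s x hx ihx =>
    intro u hu
    have hsx : s • x = (s : AddMonoidAlgebra k (Fin N → ℤ)) * x := Subalgebra.smul_def s x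
    rw [hsx] at hu
    have hmem : u ∈ ((s : AddMonoidAlgebra k (Fin N → ℤ)) * x).coeff.support :=
      Finsupp.mem_support_iff.mpr hu
    have := AddMonoidAlgebra.support_coeff_mul_subset _ x hmem
    rw [Finset.mem_add] at this
    obtain ⟨p, hp, q, hq, rfl⟩ := this
    exact H.add_mem (memM_mem_H hb (Ssub_support s.2 p (Finsupp.mem_support_iff.mp hp)))
      (ihx q (Finsupp.mem_support_iff.mp hq))

lemma mul_coeff_apery_zero (hb : ∀ i, b i ∈ H)
    {f g : AddMonoidAlgebra k (Fin N → ℤ)}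
    (hfM : ∀ u, f.coeff u ≠ 0 → MemM b u) (hf0 : f.coeff 0 = 0)
    (hg : ∀ v, g.coeff v ≠ 0 → v ∈ H) {a : Fin N → ℤ} (ha : a ∈ aperyG H b) :
    (f * g).coeff a = 0 := by
  rw [AddMonoidAlgebra.coeff_mul]
  refine Finset.sum_eq_zero fun u hu => Finset.sum_eq_zero fun v hv => ?_
  dsimp only
  split_ifs with huv
  · exfalso
    have hfu : f.coeff u ≠ 0 := Finsupp.mem_support_iff.mp hu
    have hgv : g.coeff v ≠ 0 := Finsupp.mem_support_iff.mp hv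
    obtain ⟨c, hc⟩ := hfM u hfu
    have hune : u ≠ 0 := fun h => hfu (h ▸ hf0)
    obtain ⟨j, hj⟩ := memM_nonzero hc hune
    have hub : MemM b (u - b j) := memM_sub_single hc hj
    have : a - b j ∈ H := by
      have h2 : a - b j = (u - b j) + v := by rw [← huv]; abel
      rw [h2]
      exact H.add_mem (memM_mem_H hb hub) (hg v hgv)
    exact ha.2 j this
  · rfl

lemma apery_exists
    (hli : LinearIndependent ℚ (fun i : Fin d => (fun j : Fin N => ((b i j : ℚ)))))
    {n : ℕ} (hn : 0 < n)
    (hsimp : ∀ x ∈ H, ∃ c : Fin d → ℕ, (n : ℤ) • x = ∑ i, (c i : ℤ) • b i) :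
    ∀ x ∈ H, ∃ a z : Fin N → ℤ, a ∈ aperyG H b ∧ MemM b z ∧ x = a + z := by
  suffices key : ∀ m : ℕ, ∀ x ∈ H, ∀ c : Fin d → ℕ, (n : ℤ) • x = ∑ i, (c i : ℤ) • b i →
      (∑ i, c i) ≤ m → ∃ a z : Fin N → ℤ, a ∈ aperyG H b ∧ MemM b z ∧ x = a + z by
    intro x hx
    obtain ⟨c, hc⟩ := hsimp x hx
    exact key (∑ i, c i) x hx c hc le_rfl
  intro m
  induction m using Nat.strong_induction_on with
  | _ m ih =>
    intro x hx c hc hcm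
    by_cases hap : ∀ i : Fin d, x - b i ∉ H
    · exact ⟨x, 0, ⟨hx, hap⟩, ⟨0, by simp⟩, by simp⟩
    · push_neg at hap
      obtain ⟨i, hi⟩ := hap
      obtain ⟨c', hc'⟩ := hsimp (x - b i) hi
      have hrel : ∑ j, ((c' j : ℤ) + (if j = i then (n:ℤ) else 0)) • b j
          = ∑ j, (c j : ℤ) • b j := by
        calc ∑ j, ((c' j : ℤ) + (if j = i then (n:ℤ) else 0)) • b j
            = (∑ j, (c' j : ℤ) • b j) + ∑ j, (if j = i then (n:ℤ) else 0) • b j := by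
              rw [← Finset.sum_add_distrib]
              exact Finset.sum_congr rfl fun j _ => add_smul _ _ _
          _ = (n:ℤ) • (x - b i) + (n:ℤ) • b i := by
              rw [← hc']
              congr 1
              rw [Finset.sum_congr rfl (g := fun j => if j = i then (n:ℤ) • b i else 0)]
              · simp
              · intro j _; split <;> simp_all
          _ = (n:ℤ) • x := by rw [smul_sub]; abel
          _ = ∑ j, (c j : ℤ) • b j := hc
      have hj : ∀ j, (c' j : ℤ) + (if j = i then (n:ℤ) else 0) = c j := by
        intro j
        have h0 : ∑ j, (((c' j : ℤ) + (if j = i then (n:ℤ) else 0)) - (c j : ℤ)) • b j = 0 := by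
          have heach : ∀ j ∈ Finset.univ,
              (((c' j : ℤ) + (if j = i then (n:ℤ) else 0)) - (c j : ℤ)) • b j
              = ((c' j : ℤ) + (if j = i then (n:ℤ) else 0)) • b j - (c j : ℤ) • b j :=
            fun j _ => sub_smul _ _ _
          rw [Finset.sum_congr rfl heach, Finset.sum_sub_distrib, hrel, sub_self]
        have := coeff_unique hli _ h0 j
        linarith [this]
      have hlt : ∑ j, c' j < ∑ j, c j := by
        have hle : ∀ j ∈ Finset.univ, c' j ≤ c j := by
          intro j _
          rcases eq_or_ne j i with rfl | hji
          · have := hj j; rw [if_pos rfl] at this; omega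
          · have := hj j; rw [if_neg hji, add_zero] at this; omega
        have hi' : c' i < c i := by
          have := hj i; rw [if_pos rfl] at this; omega
        exact Finset.sum_lt_sum hle ⟨i, Finset.mem_univ i, hi'⟩
      obtain ⟨a, z, haz, hz, hxz⟩ := ih (∑ j, c' j) (lt_of_lt_of_le hlt hcm)
        (x - b i) hi c' hc' le_rfl
      refine ⟨a, z + b i, haz, memM_add hz (memM_single i), ?_⟩
      have hxz' : x - b i = a + z := hxz
      rw [← add_assoc, ← hxz']
      abel

/-- The Apéry monomials always span `R` over `S`. -/
lemma span_apery
    (hex : ∀ x ∈ H, ∃ a z : Fin N → ℤ, a ∈ aperyG H b ∧ MemM b z ∧ x = a + z) :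
    Submodule.span ↥(Ssub k b) {f | ∃ a ∈ aperyG H b, f = mono k a} = Rsmod k H b := by
  apply le_antisymm
  · rw [Submodule.span_le]
    rintro f ⟨a, ha, rfl⟩
    exact Submodule.subset_span ⟨a, ha.1, rfl⟩
  · rw [Rsmod, Submodule.span_le]
    rintro f ⟨h, hh, rfl⟩
    obtain ⟨a, z, ha, hz, rfl⟩ := hex h hh
    have : mono k (a + z) = (⟨mono k z, mono_mem_Ssub hz⟩ : ↥(Ssub k b)) • mono k a := by
      rw [Subalgebra.smul_def]
      show mono k (a + z) = mono k z * mono k a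
      rw [mono_mul_mono, add_comm]
    rw [this]
    exact Submodule.smul_mem _ _ (Submodule.subset_span ⟨a, ha, rfl⟩)

/-- Uniqueness of Apéry decompositions from linear independence of the Apéry monomials. -/
lemma pair_unique_of_LI
    (hLI : LinearIndependent ↥(Ssub k b) (fun a : aperyG H b => mono k (a : Fin N → ℤ)))
    {a a' z z' : Fin N → ℤ} (ha : a ∈ aperyG H b) (ha' : a' ∈ aperyG H b)
    (hz : MemM b z) (hz' : MemM b z') (he : a + z = a' + z') : a = a' ∧ z = z' := by
  by_cases haa : a = a'
  · subst haa
    exact ⟨rfl, add_left_cancel he⟩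
  · exfalso
    set sz : ↥(Ssub k b) := ⟨mono k z, mono_mem_Ssub hz⟩ with hsz
    set sz' : ↥(Ssub k b) := ⟨mono k z', mono_mem_Ssub hz'⟩ with hsz'
    set pa : ↥(aperyG H b) := ⟨a, ha⟩ with hpa
    set pa' : ↥(aperyG H b) := ⟨a', ha'⟩ with hpa'
    have hpane : pa ≠ pa' := fun hne => haa (congrArg Subtype.val hne)
    set v : ↥(aperyG H b) → AddMonoidAlgebra k (Fin N → ℤ) :=
      fun a : aperyG H b => mono k (a : Fin N → ℤ) with hv
    set g : ↥(aperyG H b) → ↥(Ssub k b) :=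
      fun x => if x = pa then sz else if x = pa' then -sz' else 0 with hg
    have hsum : ∑ x ∈ ({pa, pa'} : Finset ↥(aperyG H b)), g x • v x = 0 := by
      rw [Finset.sum_pair hpane]
      have e1 : g pa = sz := by rw [hg]; simp
      have e2 : g pa' = -sz' := by rw [hg]; simp [hpane.symm]
      rw [e1, e2, neg_smul]
      have e4 : sz • v pa = mono k z * mono k a := Subalgebra.smul_def _ _
      have e5 : sz' • v pa' = mono k z' * mono k a' := Subalgebra.smul_def _ _
      rw [e4, e5, mono_mul_mono, mono_mul_mono, add_comm z a, add_comm z' a', he]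
      exact add_neg_cancel _
    have := linearIndependent_iff'.mp hLI _ g hsum pa (Finset.mem_insert_self _ _)
    rw [hg] at this
    simp only [if_pos rfl] at this
    exact mono_ne_zero (k := k) z (by simpa [hsz] using congrArg Subtype.val this)

/-- Linear independence of the Apéry monomials from uniqueness of decompositions. -/
lemma LI_of_unique (hb : ∀ i, b i ∈ H)
    (hu : ∀ {a a' z z' : Fin N → ℤ}, a ∈ aperyG H b → a' ∈ aperyG H b →
      MemM b z → MemM b z' → a + z = a' + z' → a = a' ∧ z = z') :
    LinearIndependent ↥(Ssub k b) (fun a : aperyG H b => mono k (a : Fin N → ℤ)) := by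
  rw [linearIndependent_iff]
  intro l hl
  refine Finsupp.ext fun a0 => ?_
  rw [Finsupp.coe_zero, Pi.zero_apply]
  by_contra hne
  have hval : (l a0 : AddMonoidAlgebra k (Fin N → ℤ)) ≠ 0 := by
    intro h0
    exact hne (Subtype.ext h0)
  obtain ⟨w, hw⟩ : ∃ w, (l a0 : AddMonoidAlgebra k (Fin N → ℤ)).coeff w ≠ 0 := by
    by_contra hc; push_neg at hc
    exact hval (AddMonoidAlgebra.coeff_eq_zero.mp (Finsupp.ext hc))
  have hwM : MemM b w := Ssub_support (l a0).2 w hw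
  set u : Fin N → ℤ := (a0 : Fin N → ℤ) + w with hu_def
  rw [Finsupp.linearCombination_apply] at hl
  have heval : (l.sum fun a s => s • mono k (a : Fin N → ℤ)).coeff u = 0 := by
    rw [hl]; rfl
  rw [Finsupp.sum, AddMonoidAlgebra.coeff_sum, Finsupp.finset_sum_apply] at heval
  have hterm : ∀ a ∈ l.support, (l a • mono k (a : Fin N → ℤ)).coeff u
      = (l a : AddMonoidAlgebra k (Fin N → ℤ)).coeff (u - (a : Fin N → ℤ)) := by
    intro a _
    have e : l a • mono k (a : Fin N → ℤ)
        = (l a : AddMonoidAlgebra k (Fin N → ℤ)) * mono k (a : Fin N → ℤ) :=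
      Subalgebra.smul_def _ _
    rw [e, mul_mono_apply]
  rw [Finset.sum_congr rfl hterm] at heval
  have hsum : ∑ a ∈ l.support, (l a : AddMonoidAlgebra k (Fin N → ℤ)).coeff (u - (a : Fin N → ℤ))
      = (l a0 : AddMonoidAlgebra k (Fin N → ℤ)).coeff w := by
    rw [Finset.sum_eq_single_of_mem a0 (Finsupp.mem_support_iff.mpr hne)]
    · rw [hu_def]; rw [add_sub_cancel_left]
    · intro a _ hane
      by_contra hterm_ne
      have hM : MemM b (u - (a : Fin N → ℤ)) := Ssub_support (l a).2 _ hterm_ne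
      have heq : (a : Fin N → ℤ) + (u - (a : Fin N → ℤ)) = (a0 : Fin N → ℤ) + w := by
        rw [hu_def]; abel
      have := (hu a.2 a0.2 hM hwM heq).1
      exact hane (Subtype.ext this)
  rw [hsum] at heval
  exact hw heval

/-- "Free" contradiction core: a nontrivial identification `z + a = z' + a'` of Apéry
decompositions contradicts freeness, in the case `z - z' ∉ M`. -/
lemma free_contra (hb : ∀ i, b i ∈ H)
    {ι : Type} {fam : ι → AddMonoidAlgebra k (Fin N → ℤ)}
    (hmem : ∀ i, fam i ∈ Rsmod k H b)
    (hfLI : LinearIndependent ↥(Ssub k b) fam)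
    (hspan : Submodule.span ↥(Ssub k b) (Set.range fam) = Rsmod k H b)
    {a a' z z' : Fin N → ℤ} (ha : a ∈ aperyG H b) (ha' : a' ∈ aperyG H b)
    (hz : MemM b z) (hz' : MemM b z') (he : z + a = z' + a')
    (hns : ¬ MemM b (z - z')) : False := by
  have hmonoa : mono k a ∈ Submodule.span ↥(Ssub k b) (Set.range fam) := by
    rw [hspan]; exact Submodule.subset_span ⟨a, ha.1, rfl⟩
  have hmonoa' : mono k a' ∈ Submodule.span ↥(Ssub k b) (Set.range fam) := by
    rw [hspan]; exact Submodule.subset_span ⟨a', ha'.1, rfl⟩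
  obtain ⟨l, hl⟩ := Finsupp.mem_span_range_iff_exists_finsupp.mp hmonoa
  obtain ⟨l', hl'⟩ := Finsupp.mem_span_range_iff_exists_finsupp.mp hmonoa'
  set sz : ↥(Ssub k b) := ⟨mono k z, mono_mem_Ssub hz⟩ with hsz
  set sz' : ↥(Ssub k b) := ⟨mono k z', mono_mem_Ssub hz'⟩ with hsz'
  set s : Finset ι := l.support ∪ l'.support with hsdef
  -- partial sums over s
  have hps : ∀ (m : ι →₀ ↥(Ssub k b)), m.support ⊆ s →
      ∀ (c : ↥(Ssub k b)), ∑ i ∈ s, (c * m i) • fam i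
        = c • (m.sum fun i t => t • fam i) := by
    intro m hms c
    have h1 : ∑ i ∈ s, (c * m i) • fam i = ∑ i ∈ s, c • (m i • fam i) :=
      Finset.sum_congr rfl fun i _ => mul_smul c (m i) (fam i)
    rw [h1, ← Finset.smul_sum]
    congr 1
    rw [Finsupp.sum]
    refine (Finset.sum_subset hms ?_).symm
    intro i _ hni
    rw [Finsupp.notMem_support_iff.mp hni, zero_smul]
  have hsum : ∑ i ∈ s, (sz * l i - sz' * l' i) • fam i = 0 := by
    have hexp : ∀ i ∈ s, (sz * l i - sz' * l' i) • fam i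
        = (sz * l i) • fam i - (sz' * l' i) • fam i :=
      fun i _ => sub_smul _ _ _
    rw [Finset.sum_congr rfl hexp, Finset.sum_sub_distrib,
      hps l Finset.subset_union_left sz, hps l' Finset.subset_union_right sz', hl, hl']
    have e4 : sz • mono k a = mono k z * mono k a := Subalgebra.smul_def _ _
    have e5 : sz' • mono k a' = mono k z' * mono k a' := Subalgebra.smul_def _ _
    rw [e4, e5, mono_mul_mono, mono_mul_mono, he, sub_self]
  have hcoef := linearIndependent_iff'.mp hfLI s _ hsum
  have hkey : ∀ i ∈ l.support, (l i : AddMonoidAlgebra k (Fin N → ℤ)).coeff 0 = 0 := by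
    intro i hi
    have h2 : sz * l i = sz' * l' i :=
      sub_eq_zero.mp (hcoef i (Finset.mem_union_left _ hi))
    have h3 : mono k z * (l i : AddMonoidAlgebra k (Fin N → ℤ))
        = mono k z' * (l' i : AddMonoidAlgebra k (Fin N → ℤ)) := by
      have := congrArg Subtype.val h2
      simpa [hsz, hsz'] using this
    have h4 : (mono k z * (l i : AddMonoidAlgebra k (Fin N → ℤ))).coeff z
        = (mono k z' * (l' i : AddMonoidAlgebra k (Fin N → ℤ))).coeff z := by rw [h3]
    have hL : (mono k z * (l i : AddMonoidAlgebra k (Fin N → ℤ))).coeff z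
        = (l i : AddMonoidAlgebra k (Fin N → ℤ)).coeff 0 := by
      rw [mono_mul_apply, neg_add_cancel]
    have hR : (mono k z' * (l' i : AddMonoidAlgebra k (Fin N → ℤ))).coeff z = 0 := by
      rw [mono_mul_apply]
      by_contra hne
      have hmm : MemM b (-z' + z) := Ssub_support (l' i).2 _ hne
      rw [neg_add_eq_sub] at hmm
      exact hns hmm
    rw [hL, hR] at h4
    exact h4
  have hone : (mono k a : AddMonoidAlgebra k (Fin N → ℤ)).coeff a = (1 : k) :=
    Finsupp.single_eq_same
  have heval : (l.sum fun i t => t • fam i).coeff a = (1 : k) := by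
    rw [hl]; exact hone
  rw [Finsupp.sum, AddMonoidAlgebra.coeff_sum, Finsupp.finset_sum_apply] at heval
  have hterm : ∀ i ∈ l.support, (l i • fam i).coeff a = 0 := by
    intro i hi
    have e : l i • fam i = (l i : AddMonoidAlgebra k (Fin N → ℤ)) * fam i :=
      Subalgebra.smul_def _ _
    rw [e]
    exact mul_coeff_apery_zero hb (Ssub_support (l i).2) (hkey i hi)
      (Rsmod_support hb (hmem i)) ha
  rw [Finset.sum_congr rfl hterm, Finset.sum_const_zero] at heval
  exact one_ne_zero heval.symm

lemma pair_unique_of_free (hb : ∀ i, b i ∈ H)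
    (hli : LinearIndependent ℚ (fun i : Fin d => (fun j : Fin N => ((b i j : ℚ)))))
    {ι : Type} {fam : ι → AddMonoidAlgebra k (Fin N → ℤ)}
    (hmem : ∀ i, fam i ∈ Rsmod k H b)
    (hfLI : LinearIndependent ↥(Ssub k b) fam)
    (hspan : Submodule.span ↥(Ssub k b) (Set.range fam) = Rsmod k H b)
    {a a' z z' : Fin N → ℤ} (ha : a ∈ aperyG H b) (ha' : a' ∈ aperyG H b)
    (hz : MemM b z) (hz' : MemM b z') (he : a + z = a' + z') : a = a' ∧ z = z' := by
  by_cases hzz : z = z'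
  · subst hzz
    constructor
    · have : z + a = z + a' := by rw [add_comm z a, add_comm z a', he]
      exact add_left_cancel this
    · rfl
  · exfalso
    have hor : ¬ MemM b (z - z') ∨ ¬ MemM b (z' - z) := by
      by_contra hc; push_neg at hc
      exact hzz (not_both_sub hli hc.1 hc.2)
    have he' : z + a = z' + a' := by rw [add_comm z a, add_comm z' a']; exact he
    rcases hor with h | h
    · exact free_contra hb hmem hfLI hspan ha ha' hz hz' he' h
    · exact free_contra hb hmem hfLI hspan ha' ha hz' hz he'.symm h

end aux

/-- `R = k[H]` is free as an `S = k[ℕE]`-module iff the monomials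
`{t^h : h ∈ Ap(H,E)}` form an `S`-basis of `R`; and the latter holds iff every element
of `H` is uniquely `a + z` with `a ∈ Ap(H,E)` and `z ∈ ℕb₁+⋯+ℕb_d`. -/
theorem free_iff_apery_basis (k : Type*) [Field k] {N d : ℕ}
    (H : AddSubmonoid (Fin N → ℤ)) (b : Fin d → (Fin N → ℤ))
    (hH : IsSimplicial N d H b) :
    ((∃ (ι : Type) (fam : ι → AddMonoidAlgebra k (Fin N → ℤ)),
        (∀ i, fam i ∈ Rsmod k H b) ∧ LinearIndependent ↥(Ssub k b) fam ∧
        Submodule.span ↥(Ssub k b) (Set.range fam) = Rsmod k H b) ↔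
      (LinearIndependent ↥(Ssub k b) (fun a : aperyG H b => mono k (a : Fin N → ℤ)) ∧
        Submodule.span ↥(Ssub k b) {f | ∃ a ∈ aperyG H b, f = mono k a} = Rsmod k H b)) ∧
    ((LinearIndependent ↥(Ssub k b) (fun a : aperyG H b => mono k (a : Fin N → ℤ)) ∧
        Submodule.span ↥(Ssub k b) {f | ∃ a ∈ aperyG H b, f = mono k a} = Rsmod k H b) ↔
      (∀ x ∈ H, ∃! p : (Fin N → ℤ) × (Fin N → ℤ),
        p.1 ∈ aperyG H b ∧ (∃ c : Fin d → ℕ, p.2 = ∑ i, (c i : ℤ) • b i) ∧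
        x = p.1 + p.2)) := by
  obtain ⟨hfg, hb, hli, n, hn, hsimp⟩ := hH
  have hex := apery_exists (H := H) hli hn hsimp
  have hspanA := span_apery (k := k) (H := H) (b := b) hex
  constructor
  · constructor
    · rintro ⟨ι, fam, hmem, hfLI, hspan⟩
      refine ⟨?_, hspanA⟩
      exact LI_of_unique hb (fun ha ha' hz hz' he =>
        pair_unique_of_free hb hli hmem hfLI hspan ha ha' hz hz' he)
    · rintro ⟨hLI, hspan⟩
      refine ⟨↥(aperyG H b), fun a => mono k (a : Fin N → ℤ), ?_, hLI, ?_⟩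
      · intro a
        exact Submodule.subset_span ⟨(a : Fin N → ℤ), a.2.1, rfl⟩
      · rw [← hspan]
        congr 1
        ext f
        constructor
        · rintro ⟨a, rfl⟩; exact ⟨(a : Fin N → ℤ), a.2, rfl⟩
        · rintro ⟨a, ha, rfl⟩; exact ⟨⟨a, ha⟩, rfl⟩
  · constructor
    · rintro ⟨hLI, -⟩
      intro x hx
      obtain ⟨a, z, ha, hz, rfl⟩ := hex x hx
      refine ⟨(a, z), ⟨ha, hz, rfl⟩, ?_⟩
      rintro ⟨a', z'⟩ ⟨ha', hz', he⟩
      have hpq := pair_unique_of_LI hLI ha' ha hz' hz (by rw [← he])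
      exact Prod.ext hpq.1 hpq.2
    · intro hdec
      refine ⟨?_, hspanA⟩
      refine LI_of_unique hb ?_
      intro a a' z z' ha ha' hz hz' he
      have hxH : a + z ∈ H := H.add_mem ha.1 (memM_mem_H hb hz)
      obtain ⟨p, hp, hpu⟩ := hdec (a + z) hxH
      have h1 : ((a, z) : (Fin N → ℤ) × (Fin N → ℤ)) = p := hpu (a, z) ⟨ha, hz, rfl⟩
      have h2 : ((a', z') : (Fin N → ℤ) × (Fin N → ℤ)) = p := hpu (a', z') ⟨ha', hz', he⟩
      have := h1.trans h2.symm
      exact ⟨congrArg Prod.fst this, congrArg Prod.snd this⟩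

end AGpaper
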